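/- Let X be a complex Banach space and T : X → X a bounded linear operator. Then T is a recurrent operator if and only if the set Rec(T) of recurrent vectors for T is dense in X (i.e., its closure is all of X). In particular, if T is recurrent, then Rec(T) is a dense Gδ subset of X. -/

import Mathlib

open Filter Topology





/-- A bounded linear operator `T` on a Banach space is *recurrent* if for each nonempty open
subset `U` there exists a positive integer `n` with `T^n(U) ∩ U ≠ ∅`. -/
def IsRecurrentOp {X : Type*} [NormedAddCommGroup X] [NormedSpace ℂ X]
    (T : X →L[ℂ] X) : Prop :=
  ∀ U : Set X, IsOpen U → U.Nonempty → ∃ n : ℕ, 0 < n ∧ ((T ^ n) '' U ∩ U).Nonempty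

/-- The set of recurrent vectors for `T`: vectors `x` such that `T^{k_n} x → x` for some
strictly increasing sequence of positive integers `(k_n)`. -/
def recVectors {X : Type*} [NormedAddCommGroup X] [NormedSpace ℂ X]
    (T : X →L[ℂ] X) : Set X :=
  {x | ∃ k : ℕ → ℕ, StrictMono k ∧ (∀ n, 0 < k n) ∧
    Tendsto (fun n => (T ^ k n) x) atTop (𝓝 x)}



section Aux
variable {X : Type*} [NormedAddCommGroup X] [NormedSpace ℂ X] (T : X →L[ℂ] X)

lemma aux_step {x : X} (hx : ∀ ε : ℝ, 0 < ε → ∃ n : ℕ, 0 < n ∧ ‖(T ^ n) x - x‖ < ε) :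
    ∀ ε : ℝ, 0 < ε → ∀ N : ℕ, ∃ n : ℕ, N < n ∧ ‖(T ^ n) x - x‖ < ε := by
  intro ε hε N
  induction N with
  | zero => exact hx ε hε
  | succ N ih =>
    obtain ⟨m, hmN, hm⟩ := ih
    rcases lt_or_ge (N + 1) m with h | h
    · exact ⟨m, h, hm⟩
    · have hC : (0 : ℝ) < ‖T ^ m‖ + 1 := by positivity
      have hpos : (0 : ℝ) < (ε - ‖(T ^ m) x - x‖) / (‖T ^ m‖ + 1) := by
        apply div_pos (by linarith) hC
      obtain ⟨n, hn, h2⟩ := hx _ hpos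
      refine ⟨m + n, by omega, ?_⟩
      have key : (T ^ (m + n)) x - x = (T ^ m) ((T ^ n) x - x) + ((T ^ m) x - x) := by
        simp [pow_add, ContinuousLinearMap.mul_apply, map_sub]
      rw [key]
      have h3 : ‖(T ^ m) ((T ^ n) x - x)‖ ≤ ‖T ^ m‖ * ‖(T ^ n) x - x‖ :=
        (T ^ m).le_opNorm _
      have h4 : ‖T ^ m‖ * ‖(T ^ n) x - x‖ < ε - ‖(T ^ m) x - x‖ := by
        have h5 : ‖T ^ m‖ * ‖(T ^ n) x - x‖ ≤ (‖T ^ m‖ + 1) * ‖(T ^ n) x - x‖ := by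
          nlinarith [norm_nonneg ((T ^ n) x - x)]
        have h6 : (‖T ^ m‖ + 1) * ‖(T ^ n) x - x‖ < ε - ‖(T ^ m) x - x‖ := by
          rw [mul_comm]
          exact (lt_div_iff₀ hC).mp h2
        linarith
      calc ‖(T ^ m) ((T ^ n) x - x) + ((T ^ m) x - x)‖
          ≤ ‖(T ^ m) ((T ^ n) x - x)‖ + ‖(T ^ m) x - x‖ := norm_add_le _ _
        _ < ε := by linarith

lemma recVectors_eq :
    recVectors T = {x | ∀ ε : ℝ, 0 < ε → ∃ n : ℕ, 0 < n ∧ ‖(T ^ n) x - x‖ < ε} := by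
  ext x
  constructor
  · rintro ⟨k, hk, hkpos, hkt⟩ ε hε
    have := (hkt.sub_const x).norm
    simp only [sub_self, norm_zero] at this
    have h2 := (this.eventually (eventually_lt_nhds hε)).exists
    obtain ⟨n, hn⟩ := h2
    exact ⟨k n, hkpos n, hn⟩
  · intro hx
    have hA := aux_step T hx
    choose g hg1 hg2 using fun (p : ℕ × ℕ) => hA (1 / (p.1 + 1)) (by positivity) p.2
    set k : ℕ → ℕ := fun n => Nat.rec (g (0, 0)) (fun n ih => g (n + 1, ih)) n with hk
    have hk0 : k 0 = g (0, 0) := rfl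
    have hks : ∀ n, k (n + 1) = g (n + 1, k n) := fun n => rfl
    have hmono : StrictMono k := by
      apply strictMono_nat_of_lt_succ
      intro n
      rw [hks]
      exact hg1 (n + 1, k n)
    have hpos : ∀ n, 0 < k n := by
      intro n
      have : k 0 ≤ k n := hmono.monotone (Nat.zero_le n)
      have h0 : 0 < k 0 := by rw [hk0]; exact hg1 (0, 0)
      omega
    refine ⟨k, hmono, hpos, ?_⟩
    have hbound : ∀ n, ‖(T ^ k n) x - x‖ < 1 / (n + 1) := by
      intro n
      cases n with
      | zero => simpa [hk0] using hg2 (0, 0)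
      | succ n =>
        have := hg2 (n + 1, k n)
        rw [← hks] at this
        exact_mod_cast this
    have hlim : Tendsto (fun n : ℕ => ‖(T ^ k n) x - x‖) atTop (𝓝 0) := by
      apply squeeze_zero (fun n => norm_nonneg _) (fun n => (hbound n).le)
      exact tendsto_one_div_add_atTop_nhds_zero_nat
    have := tendsto_sub_nhds_zero_iff.mp ((tendsto_zero_iff_norm_tendsto_zero).mpr hlim)
    exact this

lemma recVectors_eq_iInter :
    recVectors T = ⋂ m : ℕ, ⋃ n : ℕ, ⋃ (_ : 0 < n),
      {x : X | ‖(T ^ n) x - x‖ < 1 / (m + 1)} := by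
  rw [recVectors_eq]
  ext x
  simp only [Set.mem_setOf_eq, Set.mem_iInter, Set.mem_iUnion, exists_prop]
  constructor
  · intro h m
    exact h (1 / (m + 1)) (by positivity)
  · intro h ε hε
    obtain ⟨m, hm⟩ := exists_nat_one_div_lt hε
    obtain ⟨n, hn, hn2⟩ := h m
    exact ⟨n, hn, hn2.trans hm⟩

lemma recVectors_isGδ : IsGδ (recVectors T) := by
  rw [recVectors_eq_iInter]
  apply IsGδ.iInter
  intro m
  apply IsOpen.isGδ
  apply isOpen_iUnion
  intro n
  apply isOpen_iUnion
  intro _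
  exact isOpen_lt (by fun_prop) continuous_const

end Aux

theorem recurrent_iff_dense_recVectors {X : Type*} [NormedAddCommGroup X] [NormedSpace ℂ X]
    [CompleteSpace X] (T : X →L[ℂ] X) :
    (IsRecurrentOp T ↔ Dense (recVectors T)) ∧
      (IsRecurrentOp T → Dense (recVectors T) ∧ IsGδ (recVectors T)) := by
  have hdense : IsRecurrentOp T → Dense (recVectors T) := by
    intro hT
    rw [recVectors_eq_iInter]
    apply dense_iInter_of_isOpen
    · intro m
      apply isOpen_iUnion
      intro n
      apply isOpen_iUnion
      intro _
      exact isOpen_lt (by fun_prop) continuous_const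
    · intro m
      rw [dense_iff_inter_open]
      intro V hV ⟨y, hy⟩
      obtain ⟨r0, hr0, hball⟩ := Metric.isOpen_iff.mp hV y hy
      set r : ℝ := min (r0 / 2) (1 / (2 * (m + 1))) with hr
      have hrpos : 0 < r := by
        apply lt_min (by linarith) (by positivity)
      obtain ⟨n, hn, w, ⟨z, hz, hwz⟩, hw⟩ :=
        hT (Metric.ball y r) Metric.isOpen_ball ⟨y, Metric.mem_ball_self hrpos⟩
      refine ⟨z, ?_, ?_⟩
      · have hrr0 : r ≤ r0 := le_trans (min_le_left _ _) (by linarith)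
        exact hball (Metric.ball_subset_ball hrr0 hz)
      · simp only [Set.mem_iUnion, Set.mem_setOf_eq, exists_prop]
        refine ⟨n, hn, ?_⟩
        rw [← hwz, Metric.mem_ball, dist_eq_norm] at hw
        have h1 : ‖(T ^ n) z - y‖ < r := hw
        have h2 : ‖y - z‖ < r := by
          rw [← dist_eq_norm, dist_comm]; exact hz
        have h3 : ‖(T ^ n) z - z‖ ≤ ‖(T ^ n) z - y‖ + ‖y - z‖ := norm_sub_le_norm_sub_add_norm_sub _ _ _
        have hrle : r ≤ 1 / (2 * (m + 1)) := min_le_right _ _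
        have : (0:ℝ) < m + 1 := by positivity
        have h4 : 2 * r ≤ 1 / (m + 1) := by
          have he : 2 * (1 / (2 * ((m : ℝ) + 1))) = 1 / (m + 1) := by field_simp
          linarith
        calc ‖(T ^ n) z - z‖ ≤ ‖(T ^ n) z - y‖ + ‖y - z‖ := h3
          _ < r + r := by linarith
          _ ≤ 1 / (m + 1) := by linarith
  refine ⟨⟨hdense, ?_⟩, fun h => ⟨hdense h, recVectors_isGδ T⟩⟩
  intro hD U hU ⟨u, hu⟩
  obtain ⟨x, hxU, k, hk, hkpos, hkt⟩ := hD.inter_open_nonempty U hU ⟨u, hu⟩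
  have : ∀ᶠ n in atTop, (T ^ k n) x ∈ U := hkt.eventually (hU.mem_nhds hxU)
  obtain ⟨n, hn⟩ := this.exists
  exact ⟨k n, hkpos n, (T ^ k n) x, ⟨x, hxU, rfl⟩, hn⟩
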